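/- Let r ≥ 1, p ∈ [1, r], and Ω ⊂ ℝ^N open. If u_n ⇀ u weakly in L^r(Ω) and u_n → u almost everywhere in Ω, then |u_n|^p − |u_n − u|^p − |u|^p → 0 strongly in L^{r/p}(Ω). -/

import Mathlib

open MeasureTheory Filter

section BLHelpers
open ENNReal


lemma BL_rpow_sub_rpow_le (p : ℝ) (hp : 1 ≤ p) {Y X Z : ℝ} (hY : 0 ≤ Y) (hYX : Y ≤ X)
    (hXZ : X ≤ Z) : X ^ p - Y ^ p ≤ p * Z ^ (p - 1) * (X - Y) := by
  have hX : (0:ℝ) ≤ X := hY.trans hYX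
  have hZ : (0:ℝ) ≤ Z := hX.trans hXZ
  have key := Convex.norm_image_sub_le_of_norm_hasDerivWithin_le
    (f := fun t : ℝ => t ^ p) (f' := fun t : ℝ => p * t ^ (p - 1)) (s := Set.Icc 0 Z)
    (C := p * Z ^ (p - 1))
    (fun x _ => (Real.hasDerivAt_rpow_const (Or.inr hp)).hasDerivWithinAt)
    (fun x hx => by
      have h1 : (0:ℝ) ≤ x ^ (p-1) := Real.rpow_nonneg hx.1 _
      have h2 : x ^ (p-1) ≤ Z ^ (p-1) := Real.rpow_le_rpow hx.1 hx.2 (by linarith)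
      have hp0 : (0:ℝ) ≤ p := by linarith
      rw [Real.norm_eq_abs, abs_mul, abs_of_nonneg hp0, abs_of_nonneg h1]
      exact mul_le_mul_of_nonneg_left h2 hp0)
    (convex_Icc 0 Z) ⟨hY, hYX.trans hXZ⟩ ⟨hX, hXZ⟩
  have := (le_abs_self (X ^ p - Y ^ p)).trans (by simpa [Real.norm_eq_abs, abs_of_nonneg (sub_nonneg.2 hYX)] using key)
  linarith

lemma BL_abs_rpow_sub_rpow (p : ℝ) (hp : 1 ≤ p) {X Y Z : ℝ} (hX : 0 ≤ X) (hY : 0 ≤ Y)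
    (hXZ : X ≤ Z) (hYZ : Y ≤ Z) : |X ^ p - Y ^ p| ≤ p * Z ^ (p - 1) * |X - Y| := by
  rcases le_total Y X with h | h
  · rw [abs_of_nonneg (sub_nonneg.2 (Real.rpow_le_rpow hY h (by linarith))),
      abs_of_nonneg (sub_nonneg.2 h)]
    exact BL_rpow_sub_rpow_le p hp hY h hXZ
  · rw [abs_of_nonpos (sub_nonpos.2 (Real.rpow_le_rpow hX h (by linarith))),
      abs_of_nonpos (sub_nonpos.2 h), neg_sub, neg_sub]
    exact BL_rpow_sub_rpow_le p hp hX h hYZ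

lemma BL_add_rpow_le (s : ℝ) (hs : 0 ≤ s) {x y : ℝ} (hx : 0 ≤ x) (hy : 0 ≤ y) :
    (x + y) ^ s ≤ 2 ^ s * (x ^ s + y ^ s) := by
  have h1 : x + y ≤ 2 * max x y := by
    rcases le_total x y with h | h
    · simp [max_eq_right h]; linarith
    · simp [max_eq_left h]; linarith
  have h2 : (x + y) ^ s ≤ (2 * max x y) ^ s :=
    Real.rpow_le_rpow (by linarith) h1 hs
  have h3 : (2 * max x y) ^ s = 2 ^ s * (max x y) ^ s :=
    Real.mul_rpow (by norm_num) (le_max_iff.2 (Or.inl hx))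
  have h4 : (max x y) ^ s ≤ x ^ s + y ^ s := by
    rcases le_total x y with h | h
    · rw [max_eq_right h]
      nlinarith [Real.rpow_nonneg hx s]
    · rw [max_eq_left h]
      nlinarith [Real.rpow_nonneg hy s]
  calc (x+y)^s ≤ 2^s * (max x y)^s := h3 ▸ h2
    _ ≤ 2^s * (x^s + y^s) := by
        have : (0:ℝ) ≤ (2:ℝ)^s := Real.rpow_nonneg (by norm_num) s
        nlinarith

lemma BL_pointwise (p : ℝ) (hp : 1 ≤ p) {ε : ℝ} (hε : 0 < ε) :
    ∃ C : ℝ, 0 ≤ C ∧ ∀ a b : ℝ,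
      abs (|a + b| ^ p - |a| ^ p - |b| ^ p) ≤ ε * |a| ^ p + C * |b| ^ p := by
  set K : ℝ := max 1 ((p * 2 ^ (p - 1) + 1) / ε) with hK
  have hK1 : 1 ≤ K := le_max_left _ _
  have hK0 : 0 < K := lt_of_lt_of_le one_pos hK1
  have hKε : (p * 2 ^ (p - 1) + 1) / K ≤ ε := by
    have h2 : (p * 2 ^ (p - 1) + 1) / ε ≤ K := le_max_right _ _
    have h3 : p * 2 ^ (p - 1) + 1 = ((p * 2 ^ (p - 1) + 1) / ε) * ε := by field_simp
    rw [div_le_iff₀ hK0]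
    nlinarith
  refine ⟨(2 ^ p + 1) * (K ^ p + 1), by positivity, fun a b => ?_⟩
  have ha : (0:ℝ) ≤ |a| := abs_nonneg a
  have hb : (0:ℝ) ≤ |b| := abs_nonneg b
  have hap : (0:ℝ) ≤ |a| ^ p := Real.rpow_nonneg ha p
  have hbp : (0:ℝ) ≤ |b| ^ p := Real.rpow_nonneg hb p
  rcases le_or_gt |a| (K * |b|) with hab | hab
  · -- crude bound
    have habp : |a| ^ p ≤ K ^ p * |b| ^ p := by
      rw [← Real.mul_rpow hK0.le hb]
      exact Real.rpow_le_rpow ha hab (by linarith)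
    have h1 : |a + b| ^ p ≤ 2 ^ p * (|a| ^ p + |b| ^ p) := by
      calc |a + b| ^ p ≤ (|a| + |b|) ^ p :=
            Real.rpow_le_rpow (abs_nonneg _) (abs_add_le a b) (by linarith)
        _ ≤ 2 ^ p * (|a| ^ p + |b| ^ p) := BL_add_rpow_le p (by linarith) ha hb
    have h2 : abs (|a + b| ^ p - |a| ^ p - |b| ^ p) ≤ |a + b| ^ p + |a| ^ p + |b| ^ p := by
      have := Real.rpow_nonneg (abs_nonneg (a + b)) p
      rw [abs_le]; constructor <;> nlinarith
    have h2p : (0:ℝ) ≤ (2:ℝ) ^ p := Real.rpow_nonneg (by norm_num) p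
    have hKp : (0:ℝ) ≤ K ^ p := Real.rpow_nonneg hK0.le p
    nlinarith
  · -- MVT bound
    have ha0 : 0 < |a| := lt_of_le_of_lt (by positivity) hab
    have hba : |b| ≤ |a| := by
      calc |b| ≤ K * |b| := by nlinarith
        _ ≤ |a| := hab.le
    have hbK : |b| ≤ |a| / K := by
      rw [le_div_iff₀ hK0, mul_comm]; exact hab.le
    have hXZ : |a + b| ≤ 2 * |a| := by
      calc |a + b| ≤ |a| + |b| := abs_add_le a b
        _ ≤ 2 * |a| := by linarith
    have habs : abs (|a + b| - |a|) ≤ |b| := by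
      have h1 := abs_sub_abs_le_abs_sub (a + b) a
      have h2 := abs_sub_abs_le_abs_sub a (a + b)
      simp only [add_sub_cancel_left] at h1
      have : a - (a + b) = -b := by ring
      rw [this, abs_neg] at h2
      rw [abs_le]; exact ⟨by linarith, h1⟩
    have hmvt : abs (|a + b| ^ p - |a| ^ p) ≤ p * (2 * |a|) ^ (p - 1) * |b| := by
      have h := BL_abs_rpow_sub_rpow p hp (abs_nonneg (a+b)) ha hXZ (by linarith)
      refine h.trans ?_
      have hc : (0:ℝ) ≤ p * (2 * |a|) ^ (p - 1) := by
        have := Real.rpow_nonneg (by linarith : (0:ℝ) ≤ 2 * |a|) (p - 1)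
        nlinarith
      exact mul_le_mul_of_nonneg_left habs hc
    -- expand (2|a|)^(p-1)
    have hexp : (2 * |a|) ^ (p - 1) = 2 ^ (p-1) * |a| ^ (p-1) :=
      Real.mul_rpow (by norm_num) ha
    have hap1 : |a| ^ (p - 1) * |a| = |a| ^ p := by
      rw [← Real.rpow_add_one ha0.ne' (p-1), sub_add_cancel]
    rcases eq_or_lt_of_le hb with hb0 | hb0
    · -- b = 0
      have hb0' : b = 0 := abs_eq_zero.1 hb0.symm
      subst hb0'
      simp only [add_zero, abs_zero]
      rw [Real.zero_rpow (by linarith : p ≠ 0)]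
      simp only [sub_zero, sub_self, abs_zero]
      positivity
    · have hbb : b ≠ 0 := fun h => by simp [h] at hb0
      have hbp1 : |b| ^ (p - 1) * |b| = |b| ^ p := by
        rw [← Real.rpow_add_one (abs_ne_zero.2 hbb) (p-1), sub_add_cancel]
      have hA : (0:ℝ) ≤ |a| ^ (p-1) := Real.rpow_nonneg ha _
      have h2p1 : (0:ℝ) ≤ (2:ℝ) ^ (p-1) := Real.rpow_nonneg (by norm_num) _
      have h5 : |b| ^ (p-1) ≤ |a| ^ (p-1) := Real.rpow_le_rpow hb hba (by linarith)
      have hεK : p * 2 ^ (p-1) + 1 ≤ ε * K := (div_le_iff₀ hK0).1 hKε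
      have hD : (0:ℝ) ≤ |a| / K := by positivity
      have h9 : K * (|a| / K) = |a| := by field_simp
      have h10 : (p * 2 ^ (p-1) + 1) * (|a| / K) ≤ ε * |a| := by nlinarith
      have term1 : p * 2 ^ (p-1) * (|a| ^ (p-1) * |b|) ≤
          p * 2 ^ (p-1) * (|a| ^ (p-1) * (|a| / K)) :=
        mul_le_mul_of_nonneg_left (mul_le_mul_of_nonneg_left hbK hA)
          (by positivity)
      have term2 : |b| ^ (p-1) * |b| ≤ |a| ^ (p-1) * (|a| / K) :=
        mul_le_mul h5 hbK hb hA
      have term2' : |b| ^ p ≤ |a| ^ (p-1) * (|a| / K) := hbp1 ▸ term2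
      have h11 : (p * 2 ^ (p-1) + 1) * (|a| ^ (p-1) * (|a| / K)) ≤ ε * |a| ^ p := by
        have h12 := mul_le_mul_of_nonneg_right h10 hA
        calc (p * 2 ^ (p-1) + 1) * (|a| ^ (p-1) * (|a| / K))
            = (p * 2 ^ (p-1) + 1) * (|a| / K) * |a| ^ (p-1) := by ring
          _ ≤ ε * |a| * |a| ^ (p-1) := h12
          _ = ε * (|a| ^ (p-1) * |a|) := by ring
          _ = ε * |a| ^ p := by rw [hap1]
      have hexp2 : (p * 2 ^ (p-1) + 1) * (|a| ^ (p-1) * (|a| / K)) =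
          p * 2 ^ (p-1) * (|a| ^ (p-1) * (|a| / K)) + |a| ^ (p-1) * (|a| / K) := by ring
      have hsum : p * 2 ^ (p-1) * (|a| ^ (p-1) * |b|) + |b| ^ p ≤ ε * |a| ^ p := by
        linarith
      have htri : abs (|a + b| ^ p - |a| ^ p - |b| ^ p) ≤
          abs (|a + b| ^ p - |a| ^ p) + |b| ^ p := by
        have := abs_sub (|a + b| ^ p - |a| ^ p) (|b| ^ p)
        rwa [abs_of_nonneg hbp] at this
      have hCb : (0:ℝ) ≤ (2 ^ p + 1) * (K ^ p + 1) * |b| ^ p := by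
        have h2p : (0:ℝ) ≤ (2:ℝ) ^ p := Real.rpow_nonneg (by norm_num) p
        have hKp : (0:ℝ) ≤ K ^ p := Real.rpow_nonneg hK0.le p
        positivity
      have hmvt' : abs (|a + b| ^ p - |a| ^ p) ≤ p * 2 ^ (p-1) * (|a| ^ (p-1) * |b|) := by
        calc abs (|a + b| ^ p - |a| ^ p) ≤ p * (2 * |a|) ^ (p - 1) * |b| := hmvt
          _ = p * 2 ^ (p-1) * (|a| ^ (p-1) * |b|) := by rw [hexp]; ring
      linarith

lemma BL_measurable_sign : Measurable Real.sign := by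
  unfold Real.sign
  refine Measurable.ite (measurableSet_lt measurable_id measurable_const) measurable_const ?_
  exact Measurable.ite (measurableSet_lt measurable_const measurable_id)
    measurable_const measurable_const

lemma BL_mul_sign (x : ℝ) : x * Real.sign x = |x| := by
  rcases lt_trichotomy x 0 with h | h | h
  · rw [Real.sign_of_neg h, abs_of_neg h]; ring
  · simp [h]
  · rw [Real.sign_of_pos h, abs_of_pos h]; ring

lemma BL_abs_sign_le (x : ℝ) : |Real.sign x| ≤ 1 := by
  rcases Real.sign_apply_eq x with h | h | h <;> rw [h] <;> norm_num

lemma BL_bound {α : Type*} [MeasurableSpace α] {μ : Measure α} {r : ℝ} (hr : 1 ≤ r)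
    (u : ℕ → α → ℝ) (ulim : α → ℝ)
    (hu : ∀ n, MemLp (u n) (ENNReal.ofReal r) μ)
    (hweak : ∀ g : α → ℝ, MemLp g (ENNReal.ofReal r).conjExponent μ →
      Tendsto (fun n => ∫ x, u n x * g x ∂μ) atTop (nhds (∫ x, ulim x * g x ∂μ))) :
    ∃ M : ℝ≥0∞, M ≠ ⊤ ∧ ∀ n, eLpNorm (u n) (ENNReal.ofReal r) μ ≤ M := by
  set R := ENNReal.ofReal r with hRdef
  have hr0 : (0:ℝ) < r := lt_of_lt_of_le one_pos hr
  have hR1 : 1 ≤ R := by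
    rw [hRdef, ← ENNReal.ofReal_one]; exact ENNReal.ofReal_le_ofReal hr
  have hR0 : R ≠ 0 := (ENNReal.ofReal_pos.2 hr0).ne'
  have hRtop : R ≠ ⊤ := ENNReal.ofReal_ne_top
  set R' := R.conjExponent with hR'def
  have hconj : R.HolderConjugate R' := ENNReal.HolderConjugate.conjExponent hR1
  haveI : Fact (1 ≤ R') := ⟨ENNReal.HolderConjugate.one_le R' R⟩
  have hpqr : (1:ℝ≥0∞) / 1 = 1 / R + 1 / R' := by
    simp only [one_div, inv_one]
    exact (ENNReal.HolderConjugate.inv_add_inv_eq_one R R').symm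
  have hint : ∀ n (f : Lp ℝ R' μ), Integrable (fun x => u n x * f x) μ := by
    intro n f
    have h := (Lp.memLp f).smul (r := 1) (hu n)
    exact memLp_one_iff_integrable.1 h
  have hbnd : ∀ n (f : Lp ℝ R' μ),
      ‖∫ x, u n x * f x ∂μ‖ ≤ (eLpNorm (u n) R μ).toReal * ‖f‖ := by
    intro n f
    have h1 : ‖∫ x, u n x * f x ∂μ‖ ≤ ∫ x, ‖u n x * f x‖ ∂μ :=
      norm_integral_le_integral_norm _
    have h2 : ∫ x, ‖u n x * f x‖ ∂μ = (eLpNorm (fun x => u n x * f x) 1 μ).toReal := by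
      rw [integral_norm_eq_lintegral_enorm (hint n f).1,
        eLpNorm_one_eq_lintegral_enorm]
    have h3 : eLpNorm (fun x => u n x * f x) 1 μ ≤ eLpNorm (u n) R μ * eLpNorm f R' μ :=
      by have := eLpNorm_le_eLpNorm_mul_eLpNorm'_of_norm (p := R) (q := R') (r := 1) (hu n).1 (Lp.aestronglyMeasurable f)
           (· * ·) 1 (Eventually.of_forall fun x => by simp [norm_mul])
         simpa using this
    have h4 : (eLpNorm (fun x => u n x * f x) 1 μ).toReal ≤
        (eLpNorm (u n) R μ).toReal * ‖f‖ := by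
      rw [Lp.norm_def, ← ENNReal.toReal_mul]
      exact ENNReal.toReal_mono
        (ENNReal.mul_ne_top (hu n).eLpNorm_ne_top (Lp.eLpNorm_ne_top f)) h3
    linarith
  let T : ℕ → Lp ℝ R' μ →L[ℝ] ℝ := fun n =>
    LinearMap.mkContinuous
      { toFun := fun f => ∫ x, u n x * f x ∂μ
        map_add' := fun f g => by
          rw [← integral_add (hint n f) (hint n g)]
          refine integral_congr_ae ?_
          filter_upwards [Lp.coeFn_add f g] with x hx
          rw [hx]; simp; ring
        map_smul' := fun c f => by
          simp only [RingHom.id_apply, smul_eq_mul]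
          rw [← integral_const_mul]
          refine integral_congr_ae ?_
          filter_upwards [Lp.coeFn_smul c f] with x hx
          rw [hx]; simp; ring }
      ((eLpNorm (u n) R μ).toReal) (fun f => hbnd n f)
  have hTapp : ∀ n (f : Lp ℝ R' μ), T n f = ∫ x, u n x * f x ∂μ := fun n f => rfl
  have hpt : ∀ f : Lp ℝ R' μ, ∃ C, ∀ n, ‖T n f‖ ≤ C := by
    intro f
    have hg := hweak f (Lp.memLp f)
    have := (hg.norm).bddAbove_range
    obtain ⟨C, hC⟩ := this
    exact ⟨C, fun n => hC ⟨n, rfl⟩⟩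
  obtain ⟨C', hC'⟩ := banach_steinhaus hpt
  have hC'0 : 0 ≤ C' := (norm_nonneg (T 0)).trans (hC' 0)
  refine ⟨ENNReal.ofReal C', ENNReal.ofReal_ne_top, fun n => ?_⟩
  rw [ENNReal.le_ofReal_iff_toReal_le (hu n).eLpNorm_ne_top hC'0]
  set f := u n with hfdef
  set I := ∫⁻ x, (‖f x‖₊ : ℝ≥0∞) ^ r ∂μ with hIdef
  have hI : eLpNorm f R μ = I ^ (1/r) := by
    rw [eLpNorm_eq_lintegral_rpow_enorm_toReal hR0 hRtop, hRdef,
      ENNReal.toReal_ofReal hr0.le]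
    rfl
  have hItop : I ≠ ⊤ := by
    intro h
    have := (hu n).eLpNorm_lt_top
    rw [hI, h] at this
    rw [ENNReal.top_rpow_of_pos (by positivity)] at this
    exact (lt_irrefl _ this).elim
  rcases eq_or_lt_of_le hr with hr1 | hr1
  · -- r = 1
    have hReq : R = 1 := by rw [hRdef, ← hr1, ENNReal.ofReal_one]
    have hR'eq : R' = ⊤ := by
      rw [hR'def, hReq]
      simp [ENNReal.conjExponent]
    set g : α → ℝ := fun x => Real.sign (f x) with hgdef
    have hgm : AEStronglyMeasurable g μ :=
      (BL_measurable_sign.comp_aemeasurable (hu n).1.aemeasurable).aestronglyMeasurable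
    have hgb : ∀ᵐ x ∂μ, ‖g x‖ ≤ 1 :=
      Eventually.of_forall fun x => by
        rw [Real.norm_eq_abs]; exact BL_abs_sign_le _
    have hgmem : MemLp g R' μ := hR'eq ▸ memLp_top_of_bound hgm 1 hgb
    have hgnorm : ‖hgmem.toLp g‖ ≤ 1 := by
      rw [Lp.norm_toLp]
      have h1 : eLpNorm g R' μ ≤ 1 := by
        rw [hR'eq, eLpNorm_exponent_top]
        simpa using eLpNormEssSup_le_of_ae_bound hgb
      calc (eLpNorm g R' μ).toReal ≤ (1:ℝ≥0∞).toReal :=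
            ENNReal.toReal_mono ENNReal.one_ne_top h1
        _ = 1 := by simp
    have hval : T n (hgmem.toLp g) = ∫ x, |f x| ∂μ := by
      rw [hTapp]
      refine integral_congr_ae ?_
      filter_upwards [hgmem.coeFn_toLp] with x hx
      rw [hx, hgdef, BL_mul_sign]
    have habs : ∫ x, |f x| ∂μ = (eLpNorm f R μ).toReal := by
      rw [hReq, eLpNorm_one_eq_lintegral_enorm,
        ← integral_norm_eq_lintegral_enorm (hu n).1]
      simp [Real.norm_eq_abs]
      rfl
    have := (T n).le_opNorm (hgmem.toLp g)
    have hTn := hC' n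
    calc (eLpNorm f R μ).toReal = T n (hgmem.toLp g) := by rw [hval, habs]
      _ ≤ ‖T n (hgmem.toLp g)‖ := le_abs_self _
      _ ≤ ‖T n‖ * ‖hgmem.toLp g‖ := (T n).le_opNorm _
      _ ≤ C' * 1 := by
          apply mul_le_mul hTn hgnorm (norm_nonneg _) hC'0
      _ = C' := mul_one _
  · -- 1 < r
    set r' : ℝ := r / (r - 1) with hr'def
    have hrc : r.HolderConjugate r' := Real.HolderConjugate.conjExponent hr1
    have hr'0 : (0:ℝ) < r' := hrc.symm.pos
    have hR'eq : R' = ENNReal.ofReal r' := by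
      have h : R.HolderConjugate (ENNReal.ofReal r') := ⟨by rw [inv_one]; exact hrc.inv_add_inv_ennreal⟩
      rw [hR'def]
      exact @ENNReal.HolderConjugate.unique R R' hconj (ENNReal.ofReal r') h
    have hR'0 : R' ≠ 0 := ENNReal.HolderConjugate.ne_zero R' R
    have hR'top : R' ≠ ⊤ := by rw [hR'eq]; exact ENNReal.ofReal_ne_top
    have hrm0 : r - 1 ≠ 0 := by linarith
    have hrr' : (r - 1) * r' = r := by
      rw [hr'def, mul_comm, div_mul_cancel₀ _ hrm0]
    set g : α → ℝ := fun x => Real.sign (f x) * |f x| ^ (r - 1) with hgdef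
    have hφm : Measurable fun t : ℝ => Real.sign t * |t| ^ (r - 1) :=
      BL_measurable_sign.mul
        ((Real.continuous_rpow_const (by linarith)).measurable.comp measurable_abs)
    have hgm : AEStronglyMeasurable g μ :=
      (hφm.comp_aemeasurable (hu n).1.aemeasurable).aestronglyMeasurable
    have hptw : ∀ x, ((‖|f x| ^ (r-1)‖₊ : ℝ≥0∞)) ^ r' = (‖f x‖₊ : ℝ≥0∞) ^ r := by
      intro x
      have h0 : (0:ℝ) ≤ |f x| ^ (r-1) := Real.rpow_nonneg (abs_nonneg _) _
      rw [← enorm_eq_nnnorm, ← enorm_eq_nnnorm, ← ofReal_norm, ← ofReal_norm,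
        Real.norm_eq_abs, Real.norm_eq_abs, abs_of_nonneg h0,
        ENNReal.ofReal_rpow_of_nonneg h0 hr'0.le,
        ENNReal.ofReal_rpow_of_nonneg (abs_nonneg _) hr0.le,
        ← Real.rpow_mul (abs_nonneg _), hrr']
    have hcomp : eLpNorm (fun x => |f x| ^ (r-1)) R' μ = I ^ (1/r') := by
      rw [eLpNorm_eq_lintegral_rpow_enorm_toReal hR'0 hR'top, hR'eq,
        ENNReal.toReal_ofReal hr'0.le]
      congr 1
      exact lintegral_congr fun x => hptw x
    have hgabs : ∀ x, ‖g x‖ ≤ ‖|f x| ^ (r-1)‖ := by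
      intro x
      have h0 : (0:ℝ) ≤ |f x| ^ (r-1) := Real.rpow_nonneg (abs_nonneg _) _
      rw [Real.norm_eq_abs, Real.norm_eq_abs, abs_mul, abs_of_nonneg h0]
      nlinarith [BL_abs_sign_le (f x), abs_nonneg (Real.sign (f x)), h0]
    have hgle : eLpNorm g R' μ ≤ I ^ (1/r') := hcomp ▸ eLpNorm_mono hgabs
    have hI'top : I ^ (1/r') ≠ ⊤ :=
      (ENNReal.rpow_lt_top_of_nonneg (by positivity) hItop).ne
    have hgmem : MemLp g R' μ :=
      ⟨hgm, lt_of_le_of_lt hgle (lt_of_le_of_ne le_top hI'top)⟩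
    have hrmeas : AEStronglyMeasurable (fun x => |f x| ^ r) μ :=
      (((Real.continuous_rpow_const hr0.le).measurable.comp
        measurable_abs).comp_aemeasurable (hu n).1.aemeasurable).aestronglyMeasurable
    have habsr : ∫ x, |f x| ^ r ∂μ = I.toReal := by
      rw [integral_eq_lintegral_of_nonneg_ae
        (Eventually.of_forall fun x => Real.rpow_nonneg (abs_nonneg _) r) hrmeas]
      congr 1
      refine lintegral_congr fun x => ?_
      rw [← Real.norm_eq_abs, ← ENNReal.ofReal_rpow_of_nonneg (norm_nonneg _) hr0.le,
        ofReal_norm, enorm_eq_nnnorm]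
    have hval : T n (hgmem.toLp g) = I.toReal := by
      rw [hTapp, ← habsr]
      refine integral_congr_ae ?_
      filter_upwards [hgmem.coeFn_toLp] with x hx
      rw [hx]
      show f x * (Real.sign (f x) * |f x| ^ (r - 1)) = |f x| ^ r
      rcases eq_or_ne (f x) 0 with h0 | h0
      · rw [h0, abs_zero, Real.zero_rpow (by linarith : r ≠ 0)]; ring
      · rw [← mul_assoc, BL_mul_sign, mul_comm,
          ← Real.rpow_add_one (abs_ne_zero.2 h0), sub_add_cancel]
    have hXnorm : ‖hgmem.toLp g‖ ≤ I.toReal ^ (1/r') := by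
      rw [Lp.norm_toLp]
      calc (eLpNorm g R' μ).toReal ≤ (I ^ (1/r')).toReal :=
            ENNReal.toReal_mono hI'top hgle
        _ = I.toReal ^ (1/r') := (ENNReal.toReal_rpow I (1/r')).symm
    set A := I.toReal with hAdef
    have hA0 : 0 ≤ A := ENNReal.toReal_nonneg
    have key : A ≤ C' * A ^ (1/r') := by
      calc A = T n (hgmem.toLp g) := hval.symm
        _ ≤ ‖T n (hgmem.toLp g)‖ := le_abs_self _
        _ ≤ ‖T n‖ * ‖hgmem.toLp g‖ := (T n).le_opNorm _
        _ ≤ C' * (A ^ (1/r')) :=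
            mul_le_mul (hC' n) hXnorm (norm_nonneg _) hC'0
    have hgoal : (eLpNorm f R μ).toReal = A ^ (1/r) := by
      rw [hI, hAdef]
      exact (ENNReal.toReal_rpow I (1/r)).symm
    rw [hgoal]
    rcases eq_or_lt_of_le hA0 with hA | hA
    · rw [← hA, Real.zero_rpow (by positivity : (1:ℝ)/r ≠ 0)]
      exact hC'0
    · have hB : (0:ℝ) < A ^ (1/r') := Real.rpow_pos_of_pos hA _
      have h1r : 1/r = 1 - 1/r' := by
        have h := hrc.inv_add_inv_eq_one
        rw [one_div, one_div]
        linarith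
      rw [h1r, Real.rpow_sub hA, Real.rpow_one]
      rw [div_le_iff₀ hB]
      exact key

lemma BL_coe_nnnorm_rpow (y : ℝ) {s : ℝ} (hs : 0 ≤ s) :
    (‖y‖₊ : ℝ≥0∞) ^ s = ENNReal.ofReal (|y| ^ s) := by
  rw [← enorm_eq_nnnorm, ← ofReal_norm, ENNReal.ofReal_rpow_of_nonneg (norm_nonneg _) hs,
    Real.norm_eq_abs]

lemma BL_main {α : Type*} [MeasurableSpace α] {μ : Measure α} {r p : ℝ}
    (hr : 1 ≤ r) (hp1 : 1 ≤ p) (hpr : p ≤ r)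
    (v : ℕ → α → ℝ) (w : α → ℝ)
    (hv : ∀ n, AEStronglyMeasurable (v n) μ)
    (hw : MemLp w (ENNReal.ofReal r) μ)
    (M : ℝ≥0∞) (hM : M ≠ ⊤)
    (hvM : ∀ n, ∫⁻ x, (‖v n x‖₊ : ℝ≥0∞) ^ r ∂μ ≤ M)
    (hae : ∀ᵐ x ∂μ, Tendsto (fun n => v n x) atTop (nhds 0)) :
    Tendsto (fun n => eLpNorm (fun x => |v n x + w x| ^ p - |v n x| ^ p - |w x| ^ p)
      (ENNReal.ofReal (r / p)) μ) atTop (nhds 0) := by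
  have hp0 : (0:ℝ) < p := lt_of_lt_of_le one_pos hp1
  have hr0 : (0:ℝ) < r := lt_of_lt_of_le one_pos hr
  set q : ℝ := r / p with hqdef
  have hq0 : (0:ℝ) < q := div_pos hr0 hp0
  have hpq : p * q = r := by rw [hqdef, mul_comm, div_mul_cancel₀ _ hp0.ne']
  set φ : ℕ → α → ℝ := fun n x => |v n x + w x| ^ p - |v n x| ^ p - |w x| ^ p with hφdef
  have habsm : ∀ (s : ℝ), 0 ≤ s → Measurable fun t : ℝ => |t| ^ s := fun s hs =>
    (Real.continuous_rpow_const hs).measurable.comp measurable_abs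
  have hφm : ∀ n, AEMeasurable (φ n) μ := by
    intro n
    exact ((((habsm p hp0.le).comp_aemeasurable ((hv n).aemeasurable.add hw.1.aemeasurable)).sub
      ((habsm p hp0.le).comp_aemeasurable (hv n).aemeasurable)).sub
      ((habsm p hp0.le).comp_aemeasurable hw.1.aemeasurable))
  -- a.e. pointwise convergence of φ to 0
  have hφae : ∀ᵐ x ∂μ, Tendsto (fun n => φ n x) atTop (nhds 0) ∧
      Tendsto (fun n => v n x) atTop (nhds 0) := by
    filter_upwards [hae] with x hx
    refine ⟨?_, hx⟩
    have hcont : Continuous fun t : ℝ => |t| ^ p :=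
      (Real.continuous_rpow_const hp0.le).comp continuous_abs
    have h1 : Tendsto (fun n => |v n x + w x| ^ p) atTop (nhds (|w x| ^ p)) := by
      have := hcont.continuousAt (x := w x)
      have hadd : Tendsto (fun n => v n x + w x) atTop (nhds (w x)) := by
        simpa using hx.add tendsto_const_nhds
      simpa [Function.comp_def] using this.tendsto.comp hadd
    have h2 : Tendsto (fun n => |v n x| ^ p) atTop (nhds 0) := by
      have := hcont.continuousAt (x := (0:ℝ))
      have h3 := this.tendsto.comp hx
      simpa [Function.comp_def, Real.zero_rpow hp0.ne'] using h3
    have := (h1.sub h2).sub (tendsto_const_nhds (x := |w x| ^ p))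
    simpa using this
  -- the integrals Iq
  set Iq : ℕ → ℝ≥0∞ := fun n => ∫⁻ x, ENNReal.ofReal (|φ n x| ^ q) ∂μ with hIqdef
  have hIw : ∫⁻ x, (‖w x‖₊ : ℝ≥0∞) ^ r ∂μ ≠ ⊤ := by
    intro h
    have h2 := hw.eLpNorm_lt_top
    rw [eLpNorm_eq_lintegral_rpow_enorm_toReal ((ENNReal.ofReal_pos.2 hr0).ne')
      ENNReal.ofReal_ne_top, ENNReal.toReal_ofReal hr0.le, (show ∫⁻ x, ‖w x‖ₑ ^ r ∂μ = ⊤ from h),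
      ENNReal.top_rpow_of_pos (by positivity)] at h2
    exact lt_irrefl _ h2
  have hImain : Tendsto Iq atTop (nhds 0) := by
    rw [ENNReal.tendsto_atTop_zero]
    intro η hη
    have hη2 : (0:ℝ≥0∞) < η / 2 := ENNReal.div_pos hη.ne' (by norm_num)
    -- choose ε > 0 with ofReal (2^q * ε^q) * M < η/2
    obtain ⟨ε, hεsmall, hε0⟩ :
        ∃ ε : ℝ, ENNReal.ofReal (2 ^ q * ε ^ q) * M < η / 2 ∧ 0 < ε := by
      have hcont : Tendsto (fun ε : ℝ => ENNReal.ofReal (2 ^ q * ε ^ q) * M)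
          (nhdsWithin 0 (Set.Ioi 0)) (nhds 0) := by
        have hG : Continuous fun ε : ℝ => (2:ℝ) ^ q * ε ^ q :=
          continuous_const.mul (Real.continuous_rpow_const hq0.le)
        have h1 : Tendsto (fun ε : ℝ => ENNReal.ofReal (2 ^ q * ε ^ q))
            (nhdsWithin 0 (Set.Ioi 0)) (nhds 0) := by
          have := (ENNReal.continuous_ofReal.comp hG).tendsto 0
          rw [Function.comp] at this
          simp only [Real.zero_rpow hq0.ne', mul_zero, ENNReal.ofReal_zero] at this
          exact this.mono_left nhdsWithin_le_nhds
        simpa using ENNReal.Tendsto.mul_const h1 (Or.inr hM)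
      have hev := (hcont.eventually_lt_const hη2).and self_mem_nhdsWithin
      obtain ⟨ε, h1, h2⟩ := hev.exists
      exact ⟨ε, h1, h2⟩
    obtain ⟨C, hC0, hC⟩ := BL_pointwise p hp1 hε0
    -- key real inequality
    have hkey : ∀ n x, |φ n x| ^ q ≤
        2 ^ q * ε ^ q * |v n x| ^ r + 2 ^ q * C ^ q * |w x| ^ r := by
      intro n x
      have hvp : (0:ℝ) ≤ |v n x| ^ p := Real.rpow_nonneg (abs_nonneg _) _
      have hwp : (0:ℝ) ≤ |w x| ^ p := Real.rpow_nonneg (abs_nonneg _) _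
      have h1 : abs (φ n x) ≤ ε * |v n x| ^ p + C * |w x| ^ p := hC _ _
      have h2 : |φ n x| ^ q ≤ (ε * |v n x| ^ p + C * |w x| ^ p) ^ q :=
        Real.rpow_le_rpow (abs_nonneg _) h1 hq0.le
      have h3 : (ε * |v n x| ^ p + C * |w x| ^ p) ^ q ≤
          2 ^ q * ((ε * |v n x| ^ p) ^ q + (C * |w x| ^ p) ^ q) :=
        BL_add_rpow_le q hq0.le (by positivity) (by positivity)
      have h4 : (ε * |v n x| ^ p) ^ q = ε ^ q * |v n x| ^ r := by
        rw [Real.mul_rpow hε0.le hvp, ← Real.rpow_mul (abs_nonneg _), hpq]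
      have h5 : (C * |w x| ^ p) ^ q = C ^ q * |w x| ^ r := by
        rw [Real.mul_rpow hC0 hwp, ← Real.rpow_mul (abs_nonneg _), hpq]
      rw [h4, h5] at h3
      calc |φ n x| ^ q ≤ (ε * |v n x| ^ p + C * |w x| ^ p) ^ q := h2
        _ ≤ 2 ^ q * (ε ^ q * |v n x| ^ r + C ^ q * |w x| ^ r) := h3
        _ = 2 ^ q * ε ^ q * |v n x| ^ r + 2 ^ q * C ^ q * |w x| ^ r := by ring
    -- the truncated functions
    set ψ : ℕ → α → ℝ≥0∞ := fun n x =>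
      ENNReal.ofReal (|φ n x| ^ q - 2 ^ q * ε ^ q * |v n x| ^ r) with hψdef
    have hψm : ∀ n, AEMeasurable (ψ n) μ := by
      intro n
      refine ENNReal.measurable_ofReal.comp_aemeasurable ?_
      exact ((habsm q hq0.le).comp_aemeasurable (hφm n)).sub
        (((habsm r hr0.le).comp_aemeasurable (hv n).aemeasurable).const_mul _)
    have hψbound : ∀ n, ψ n ≤ᵐ[μ] fun x => ENNReal.ofReal (2 ^ q * C ^ q * |w x| ^ r) := by
      intro n
      refine Eventually.of_forall fun x => ?_
      exact ENNReal.ofReal_le_ofReal (by linarith [hkey n x])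
    have hψfin : ∫⁻ x, ENNReal.ofReal (2 ^ q * C ^ q * |w x| ^ r) ∂μ ≠ ⊤ := by
      have heq : ∀ x : α, ENNReal.ofReal (2 ^ q * C ^ q * |w x| ^ r) =
          ENNReal.ofReal (2 ^ q * C ^ q) * (‖w x‖₊ : ℝ≥0∞) ^ r := by
        intro x
        rw [BL_coe_nnnorm_rpow _ hr0.le, ← ENNReal.ofReal_mul (by positivity)]
      rw [lintegral_congr heq, lintegral_const_mul' _ _ ENNReal.ofReal_ne_top]
      exact ENNReal.mul_ne_top ENNReal.ofReal_ne_top hIw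
    have hψae : ∀ᵐ x ∂μ, Tendsto (fun n => ψ n x) atTop (nhds 0) := by
      filter_upwards [hφae] with x hx
      have hcq : Continuous fun t : ℝ => |t| ^ q :=
        (Real.continuous_rpow_const hq0.le).comp continuous_abs
      have hcr : Continuous fun t : ℝ => |t| ^ r :=
        (Real.continuous_rpow_const hr0.le).comp continuous_abs
      have h1 : Tendsto (fun n => |φ n x| ^ q) atTop (nhds 0) := by
        have h := (hcq.continuousAt (x := (0:ℝ))).tendsto.comp hx.1
        simpa [Function.comp_def, Real.zero_rpow hq0.ne'] using h
      have h2 : Tendsto (fun n => 2 ^ q * ε ^ q * |v n x| ^ r) atTop (nhds 0) := by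
        have h := (hcr.continuousAt (x := (0:ℝ))).tendsto.comp hx.2
        simp only [Function.comp, abs_zero, Real.zero_rpow hr0.ne'] at h
        simpa using h.const_mul (2 ^ q * ε ^ q)
      have h3 := h1.sub h2
      rw [sub_zero] at h3
      have h4 := (ENNReal.continuous_ofReal.tendsto 0).comp h3
      simpa [Function.comp_def] using h4
    have hDCT : Tendsto (fun n => ∫⁻ x, ψ n x ∂μ) atTop (nhds 0) := by
      have h := tendsto_lintegral_of_dominated_convergence'
        (μ := μ) (F := ψ) (f := fun _ => 0)
        (fun x => ENNReal.ofReal (2 ^ q * C ^ q * |w x| ^ r)) hψm hψbound hψfin hψae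
      simpa using h
    obtain ⟨N, hN⟩ := ENNReal.tendsto_atTop_zero.1 hDCT (η / 2) hη2
    refine ⟨N, fun n hn => ?_⟩
    -- I n ≤ ∫ ψ n + ofReal(2^q ε^q) * ∫ |v n|^r
    have hsplit : Iq n ≤ (∫⁻ x, ψ n x ∂μ) +
        ENNReal.ofReal (2 ^ q * ε ^ q) * ∫⁻ x, (‖v n x‖₊ : ℝ≥0∞) ^ r ∂μ := by
      have hptle : ∀ x, ENNReal.ofReal (|φ n x| ^ q) ≤
          ψ n x + ENNReal.ofReal (2 ^ q * ε ^ q) * (‖v n x‖₊ : ℝ≥0∞) ^ r := by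
        intro x
        have heq : |φ n x| ^ q =
            (|φ n x| ^ q - 2 ^ q * ε ^ q * |v n x| ^ r) + 2 ^ q * ε ^ q * |v n x| ^ r := by
          ring
        calc ENNReal.ofReal (|φ n x| ^ q)
            ≤ ψ n x + ENNReal.ofReal (2 ^ q * ε ^ q * |v n x| ^ r) := by
              rw [heq]; exact ENNReal.ofReal_add_le
          _ = ψ n x + ENNReal.ofReal (2 ^ q * ε ^ q) * (‖v n x‖₊ : ℝ≥0∞) ^ r := by
              rw [BL_coe_nnnorm_rpow _ hr0.le, ← ENNReal.ofReal_mul (by positivity)]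
      calc Iq n ≤ ∫⁻ x, (ψ n x +
            ENNReal.ofReal (2 ^ q * ε ^ q) * (‖v n x‖₊ : ℝ≥0∞) ^ r) ∂μ :=
            lintegral_mono hptle
        _ = (∫⁻ x, ψ n x ∂μ) +
            ∫⁻ x, ENNReal.ofReal (2 ^ q * ε ^ q) * (‖v n x‖₊ : ℝ≥0∞) ^ r ∂μ :=
            lintegral_add_left' (hψm n) _
        _ = (∫⁻ x, ψ n x ∂μ) +
            ENNReal.ofReal (2 ^ q * ε ^ q) * ∫⁻ x, (‖v n x‖₊ : ℝ≥0∞) ^ r ∂μ := by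
            rw [lintegral_const_mul' _ _ ENNReal.ofReal_ne_top]
    calc Iq n ≤ (∫⁻ x, ψ n x ∂μ) +
          ENNReal.ofReal (2 ^ q * ε ^ q) * ∫⁻ x, (‖v n x‖₊ : ℝ≥0∞) ^ r ∂μ := hsplit
      _ ≤ η / 2 + η / 2 := by
          refine add_le_add (hN n hn) ?_
          refine le_trans (mul_le_mul_right (hvM n) _) hεsmall.le
      _ = η := ENNReal.add_halves η
  -- conclude: eLpNorm = Iq ^ (1/q) → 0
  have hQ0 : (ENNReal.ofReal q) ≠ 0 := (ENNReal.ofReal_pos.2 hq0).ne'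
  have heLp : ∀ n, eLpNorm (φ n) (ENNReal.ofReal q) μ = (Iq n) ^ (1/q) := by
    intro n
    rw [eLpNorm_eq_lintegral_rpow_enorm_toReal hQ0 ENNReal.ofReal_ne_top,
      ENNReal.toReal_ofReal hq0.le]
    congr 1
    exact lintegral_congr fun x => BL_coe_nnnorm_rpow _ hq0.le
  rw [ENNReal.tendsto_atTop_zero]
  intro η hη
  rcases eq_or_ne η ⊤ with rfl | hηtop
  · exact ⟨0, fun n _ => le_top⟩
  have hηq : (0:ℝ≥0∞) < η ^ q := ENNReal.rpow_pos hη hηtop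
  obtain ⟨N, hN⟩ := ENNReal.tendsto_atTop_zero.1 hImain (η ^ q) hηq
  refine ⟨N, fun n hn => ?_⟩
  rw [heLp n]
  calc (Iq n) ^ (1/q) ≤ (η ^ q) ^ (1/q) :=
        ENNReal.rpow_le_rpow (hN n hn) (by positivity)
    _ = η := by
        rw [← ENNReal.rpow_mul, mul_one_div, div_self hq0.ne', ENNReal.rpow_one]

end BLHelpers

open scoped ENNReal NNReal


/-- Brézis–Lieb type lemma: let `r ≥ 1`, `p ∈ [1, r]`, `Ω ⊂ ℝᴺ` open. If `uₙ ⇀ u`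
weakly in `L^r(Ω)` and `uₙ → u` a.e. in `Ω`, then
`|uₙ|^p − |uₙ − u|^p − |u|^p → 0` strongly in `L^{r/p}(Ω)`. -/
theorem stmt_4 (N : ℕ) (Ω : Set (EuclideanSpace ℝ (Fin N))) (hΩ : IsOpen Ω)
    (r p : ℝ) (hr : 1 ≤ r) (hp1 : 1 ≤ p) (hpr : p ≤ r)
    (u : ℕ → EuclideanSpace ℝ (Fin N) → ℝ) (ulim : EuclideanSpace ℝ (Fin N) → ℝ)
    -- uₙ, u ∈ L^r(Ω)
    (hu : ∀ n, MemLp (u n) (ENNReal.ofReal r) (volume.restrict Ω))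
    (hul : MemLp ulim (ENNReal.ofReal r) (volume.restrict Ω))
    -- uₙ ⇀ u weakly in L^r(Ω): tested against every g in the dual space L^{r'}(Ω)
    (hweak : ∀ g : EuclideanSpace ℝ (Fin N) → ℝ,
      MemLp g (ENNReal.ofReal r).conjExponent (volume.restrict Ω) →
      Tendsto (fun n => ∫ x in Ω, u n x * g x) atTop (nhds (∫ x in Ω, ulim x * g x)))
    -- uₙ → u almost everywhere in Ω
    (hae : ∀ᵐ x ∂(volume.restrict Ω), Tendsto (fun n => u n x) atTop (nhds (ulim x))) :
    Tendsto
      (fun n => eLpNorm (fun x => |u n x| ^ p - |u n x - ulim x| ^ p - |ulim x| ^ p)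
        (ENNReal.ofReal (r / p)) (volume.restrict Ω))
      atTop (nhds 0) := by
  set μ := volume.restrict Ω with hμdef
  have hr0 : (0:ℝ) < r := lt_of_lt_of_le one_pos hr
  set R := ENNReal.ofReal r with hRdef
  have hR1 : 1 ≤ R := by
    rw [hRdef, ← ENNReal.ofReal_one]; exact ENNReal.ofReal_le_ofReal hr
  have hR0 : R ≠ 0 := (ENNReal.ofReal_pos.2 hr0).ne'
  have hRtop : R ≠ ⊤ := ENNReal.ofReal_ne_top
  obtain ⟨M₀, hM₀top, hM₀⟩ := BL_bound hr u ulim hu hweak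
  set v : ℕ → EuclideanSpace ℝ (Fin N) → ℝ := fun n x => u n x - ulim x with hvdef
  have hv : ∀ n, AEStronglyMeasurable (v n) μ := fun n => ((hu n).sub hul).1
  set B := M₀ + eLpNorm ulim R μ with hBdef
  have hBtop : B ≠ ⊤ := ENNReal.add_ne_top.2 ⟨hM₀top, hul.eLpNorm_ne_top⟩
  have hvM : ∀ n, ∫⁻ x, (‖v n x‖₊ : ℝ≥0∞) ^ r ∂μ ≤ B ^ r := by
    intro n
    have h1 : eLpNorm (v n) R μ ≤ B := by
      refine le_trans ?_ (add_le_add (hM₀ n) le_rfl)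
      exact eLpNorm_sub_le (hu n).1 hul.1 hR1
    have h2 : ∫⁻ x, (‖v n x‖₊ : ℝ≥0∞) ^ r ∂μ = (eLpNorm (v n) R μ) ^ r := by
      rw [eLpNorm_eq_lintegral_rpow_enorm_toReal hR0 hRtop, ENNReal.toReal_ofReal hr0.le,
        ← ENNReal.rpow_mul, one_div, inv_mul_cancel₀ hr0.ne', ENNReal.rpow_one]
      rfl
    rw [h2]
    exact ENNReal.rpow_le_rpow h1 hr0.le
  have hae' : ∀ᵐ x ∂μ, Tendsto (fun n => v n x) atTop (nhds 0) := by
    filter_upwards [hae] with x hx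
    simpa using hx.sub_const (ulim x)
  have main := BL_main hr hp1 hpr v ulim hv hul (B ^ r)
    (ENNReal.rpow_lt_top_of_nonneg hr0.le hBtop).ne hvM hae'
  have hfun : (fun n => eLpNorm
      (fun x => |u n x| ^ p - |u n x - ulim x| ^ p - |ulim x| ^ p)
      (ENNReal.ofReal (r / p)) μ) = fun n => eLpNorm
      (fun x => |v n x + ulim x| ^ p - |v n x| ^ p - |ulim x| ^ p)
      (ENNReal.ofReal (r / p)) μ := by
    funext n
    congr 1
    funext x
    rw [hvdef]
    simp only [sub_add_cancel]
  rw [hfun]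
  exact main
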